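/- Let G be a countably infinite group. Then G contains 2^ℵ₀ pairwise coarsely non-equivalent thick subsets: there exists a family 𝔉 of thick subsets of G with |𝔉| = 2^ℵ₀ such that any two distinct members of 𝔉 are not coarsely equivalent as subsets of G. -/

import Mathlib

set_option maxHeartbeats 1000000

open Pointwise

/-- The ball `B_X(x, F) = ((F·x) ∪ {x}) ∩ X` in a subset `X` of a group `G`. -/
def ballIn {G : Type*} [Group G] (X : Set G) (F : Finset G) (x : G) : Set G :=
  ((F : Set G) * {x} ∪ {x}) ∩ X

/-- A bijection `f : X ≃ X'` between subsets of a group `G` is an asymorphism if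
it is coarse in both directions. -/
def IsAsymorphism {G : Type*} [Group G] (X X' : Set G) (f : X ≃ X') : Prop :=
  (∀ F : Finset G, ∃ F' : Finset G, ∀ x y : X,
      (y : G) ∈ (F : Set G) * {(x : G)} ∪ {(x : G)} →
      (f y : G) ∈ (F' : Set G) * {(f x : G)} ∪ {(f x : G)}) ∧
  (∀ F : Finset G, ∃ F' : Finset G, ∀ x y : X',
      (y : G) ∈ (F : Set G) * {(x : G)} ∪ {(x : G)} →
      (f.symm y : G) ∈ (F' : Set G) * {(f.symm x : G)} ∪ {(f.symm x : G)})

/-- `Y` is a large subset of `X` (subsets of a group `G`). -/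
def LargeIn {G : Type*} [Group G] (Y X : Set G) : Prop :=
  Y ⊆ X ∧ ∃ F : Finset G, X ⊆ (F : Set G) * Y ∪ Y

/-- Subsets `X, X'` of a group `G` are coarsely equivalent if some large subsets
of each are asymorphic. -/
def CoarselyEquiv {G : Type*} [Group G] (X X' : Set G) : Prop :=
  ∃ Y Y' : Set G, LargeIn Y X ∧ LargeIn Y' X' ∧ ∃ f : Y ≃ Y', IsAsymorphism Y Y' f

/-- `A ⊆ G` is thick: every finite `F ⊆ G` admits `g ∈ A` with `F·g ⊆ A`. -/
def Thick {G : Type*} [Group G] (A : Set G) : Prop :=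
  ∀ F : Finset G, ∃ g ∈ A, (F : Set G) * {g} ⊆ A

namespace ThickAux

variable {G : Type*} [Group G] [DecidableEq G] [Infinite G]

lemma mem_ball_iff {F : Finset G} {x y : G} :
    y ∈ (F : Set G) * ({x} : Set G) ↔ y * x⁻¹ ∈ F := by
  simp only [Set.mem_mul, Set.mem_singleton_iff, Finset.mem_coe]
  constructor
  · rintro ⟨a, ha, b, hb, rfl⟩; subst hb; simpa using ha
  · intro h; exact ⟨y * x⁻¹, h, x, rfl, by group⟩

lemma mem_ball_of {F : Finset G} {x y : G} (h : y * x⁻¹ ∈ F) :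
    y ∈ (F : Set G) * ({x} : Set G) := mem_ball_iff.2 h

lemma ncard_mul_le (F : Finset G) {D : Set G} (hD : D.Finite) :
    ((F : Set G) * D).ncard ≤ F.card * D.ncard := by
  have h1 : (F : Set G) * D = ((F * hD.toFinset : Finset G) : Set G) := by
    rw [Finset.coe_mul, Set.Finite.coe_toFinset]
  have h2 : D.ncard = hD.toFinset.card := by
    rw [← Set.ncard_coe_finset, Set.Finite.coe_toFinset]
  rw [h1, Set.ncard_coe_finset, h2]
  exact Finset.card_mul_le

variable (e : ℕ ≃ G)

/-- The filtration of `G` by finite symmetric sets. -/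
noncomputable def Fil : ℕ → Finset G
  | 0 => {1}
  | (n+1) => ((Fil n * Fil n) ∪ {e n}) ∪ ((Fil n * Fil n) ∪ {e n})⁻¹

lemma mulpart_subset_Fil (n : ℕ) : Fil e n * Fil e n ⊆ Fil e (n+1) := by
  intro x hx
  show x ∈ Fil e (n+1)
  simp only [Fil]
  exact Finset.mem_union_left _ (Finset.mem_union_left _ hx)

lemma one_mem_Fil (n : ℕ) : (1 : G) ∈ Fil e n := by
  induction n with
  | zero => simp [Fil]
  | succ n ih =>
    exact mulpart_subset_Fil e n (by simpa using Finset.mul_mem_mul ih ih)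

lemma inv_mem_Fil {n : ℕ} {x : G} (h : x ∈ Fil e n) : x⁻¹ ∈ Fil e n := by
  cases n with
  | zero => simp only [Fil, Finset.mem_singleton] at h ⊢; simp [h]
  | succ n =>
    simp only [Fil, Finset.mem_union, Finset.mem_inv'] at h ⊢
    rcases h with h | h
    · exact Or.inr (by simpa using h)
    · exact Or.inl (by simpa using h)

lemma Fil_subset_succ (n : ℕ) : Fil e n ⊆ Fil e (n+1) := by
  intro x hx
  exact mulpart_subset_Fil e n (by simpa using Finset.mul_mem_mul hx (one_mem_Fil e n))

lemma Fil_mono : Monotone (Fil e) := monotone_nat_of_le_succ (Fil_subset_succ e)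

lemma mul_mem_Fil {a b n : ℕ} {x y : G} (ha : a ≤ n) (hb : b ≤ n)
    (hx : x ∈ Fil e a) (hy : y ∈ Fil e b) : x * y ∈ Fil e (n+1) := by
  exact mulpart_subset_Fil e n
    (Finset.mul_mem_mul (Fil_mono e ha hx) (Fil_mono e hb hy))

lemma e_mem_Fil (n : ℕ) : e n ∈ Fil e (n+1) := by
  show e n ∈ Fil e (n+1)
  simp only [Fil]
  exact Finset.mem_union_left _ (Finset.mem_union_right _ (by simp))

lemma le_Fil_card (n : ℕ) : n ≤ (Fil e n).card := by
  have hsub : (Finset.range n).image e ⊆ Fil e n := by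
    intro x hx
    simp only [Finset.mem_image, Finset.mem_range] at hx
    obtain ⟨k, hk, rfl⟩ := hx
    exact Fil_mono e (Nat.succ_le_of_lt hk) (e_mem_Fil e k)
  calc n = ((Finset.range n).image e).card := by
        rw [Finset.card_image_of_injective _ e.injective, Finset.card_range]
    _ ≤ (Fil e n).card := Finset.card_le_card hsub

lemma mem_Fil_exhaust (g : G) : ∃ n, g ∈ Fil e n :=
  ⟨e.symm g + 1, by simpa using e_mem_Fil e (e.symm g)⟩

lemma finset_subset_Fil (F : Finset G) : ∃ n, (F : Set G) ⊆ (Fil e n : Set G) := by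
  classical
  induction F using Finset.induction with
  | empty => exact ⟨0, by simp⟩
  | @insert a F ha ih =>
    obtain ⟨n, hn⟩ := ih
    obtain ⟨m, hm⟩ := mem_Fil_exhaust e a
    refine ⟨max n m, ?_⟩
    intro x hx
    simp only [Finset.coe_insert, Set.mem_insert_iff] at hx
    rcases hx with rfl | hx
    · exact Fil_mono e (le_max_right n m) hm
    · exact Fil_mono e (le_max_left n m) (hn hx)


/-- prefix products `S_j = F_1 ⬝ F_2 ⬝ ⋯ ⬝ F_j`. -/
noncomputable def SS : ℕ → Finset G
  | 0 => 1
  | (j+1) => SS j * Fil e (j+1)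

lemma one_mem_SS (j : ℕ) : (1:G) ∈ SS e j := by
  induction j with
  | zero => simp [SS, Finset.one_mem_one]
  | succ j ih => simpa [SS] using Finset.mul_mem_mul ih (one_mem_Fil e (j+1))

lemma SS_subset_Fil (j : ℕ) : SS e j ⊆ Fil e (j+1) := by
  induction j with
  | zero =>
    intro x hx
    simp only [SS, Finset.mem_one] at hx
    subst hx; exact one_mem_Fil e 1
  | succ j ih =>
    intro x hx
    simp only [SS] at hx
    rw [Finset.mem_mul] at hx
    obtain ⟨a, ha, b, hb, rfl⟩ := hx
    exact mul_mem_Fil e (le_refl _) (le_refl _) (Fil_mono e (by omega) (ih ha)) hb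

lemma SS_subset_succ (j : ℕ) : SS e j ⊆ SS e (j+1) := by
  intro x hx
  simpa [SS] using Finset.mul_mem_mul hx (one_mem_Fil e (j+1))

lemma SS_mono : Monotone (SS e) := monotone_nat_of_le_succ (SS_subset_succ e)

lemma Fil_subset_SS (j : ℕ) : Fil e j ⊆ SS e j := by
  cases j with
  | zero => intro x hx; simp only [Fil, Finset.mem_singleton] at hx; subst hx; exact one_mem_SS e 0
  | succ j =>
    intro x hx
    have : (1:G) * x ∈ SS e j * Fil e (j+1) :=
      Finset.mul_mem_mul (one_mem_SS e j) hx
    simpa [SS] using this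

/-- mass of the `j`-th prefix product. -/
noncomputable def Wm (j : ℕ) : ℕ := (SS e j).card

lemma le_Wm (j : ℕ) : j ≤ Wm e j := by
  have h1 : (Fil e j).card ≤ (SS e j).card := Finset.card_le_card (Fil_subset_SS e j)
  exact le_trans (le_Fil_card e j) h1

lemma Wm_mono : Monotone (Wm e) := fun a b hab => Finset.card_le_card (SS_mono e hab)

lemma Wm_pos (j : ℕ) : 1 ≤ Wm e j := Finset.card_pos.2 ⟨1, one_mem_SS e j⟩

/-- suffix products `F_{r+1} ⬝ ⋯ ⬝ F_j`. -/
noncomputable def Suf (r : ℕ) : ℕ → Finset G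
  | 0 => 1
  | (j+1) => if r ≤ j then Suf r j * Fil e (j+1) else 1

lemma SS_split {r j : ℕ} (h : r ≤ j) : SS e j = SS e r * Suf e r j := by
  induction j with
  | zero =>
    have : r = 0 := by omega
    subst this; simp [Suf]
  | succ j ih =>
    rcases Nat.lt_or_ge r (j+1) with hlt | hge
    · have hr : r ≤ j := by omega
      have : Suf e r (j+1) = Suf e r j * Fil e (j+1) := by simp [Suf, hr]
      rw [this, SS, ih hr, mul_assoc]
    · have : r = j+1 := by omega
      subst this
      simp [Suf]

/-- diameter bound: two points of `S_j · z` are at scale `j+2` from each other. -/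
lemma SS_diam {j : ℕ} {z u v : G} (hu : u ∈ (SS e j : Set G) * {z})
    (hv : v ∈ (SS e j : Set G) * {z}) : v * u⁻¹ ∈ Fil e (j+2) := by
  rw [mem_ball_iff] at hu hv
  have h : v * u⁻¹ = (v * z⁻¹) * (u * z⁻¹)⁻¹ := by group
  rw [h]
  exact mul_mem_Fil e (le_refl _) (le_refl _)
    (SS_subset_Fil e j (by simpa using hv))
    (inv_mem_Fil e (SS_subset_Fil e j (by simpa using hu)))

/-- the section lemma: around any point of `S_j · z` there are at least `|F_r|`
points of `S_j · z` within scale `r+3`. -/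
lemma SS_section {j r : ℕ} (hr1 : 1 ≤ r) (hrj : r ≤ j) {z u : G}
    (hu : u ∈ (SS e j : Set G) * {z}) :
    ∃ sec : Finset G, (sec : Set G) ⊆ ((SS e j : Set G) * {z}) ∧
      (∀ x ∈ sec, x * u⁻¹ ∈ Fil e (r+3)) ∧ (Fil e r).card ≤ sec.card := by
  rw [mem_ball_iff] at hu
  -- decompose u * z⁻¹ ∈ SS j = SS (r-1) * Fil r * Suf r j
  obtain ⟨r', rfl⟩ : ∃ r', r = r' + 1 := ⟨r - 1, by omega⟩
  have hsplit : SS e j = (SS e r' * Fil e (r'+1)) * Suf e (r'+1) j := by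
    rw [← SS, ← SS_split e hrj]
  have hu' := hu
  rw [hsplit, Finset.mem_mul] at hu'
  obtain ⟨pa, hpa, qq, hqq, hpaqq⟩ := hu'
  rw [Finset.mem_mul] at hpa
  obtain ⟨p, hp, aa, haa, rfl⟩ := hpa
  refine ⟨(Fil e (r'+1)).image (fun a' => p * a' * (qq * z)), ?_, ?_, ?_⟩
  · intro x hx
    simp only [Finset.coe_image, Set.mem_image, Finset.mem_coe] at hx
    obtain ⟨a', ha', rfl⟩ := hx
    apply mem_ball_of
    have : p * a' * (qq*z) * z⁻¹ = (p * a') * qq := by group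
    rw [this, hsplit]
    exact Finset.mul_mem_mul (Finset.mul_mem_mul hp ha') hqq
  · intro x hx
    simp only [Finset.mem_image] at hx
    obtain ⟨a', ha', rfl⟩ := hx
    have hueq : u = p * aa * qq * z := by
      have : u = (u * z⁻¹) * z := by group
      rw [this, ← hpaqq]
    have hkey : (p * a' * (qq * z)) * u⁻¹ = p * (a' * aa⁻¹) * p⁻¹ := by
      rw [hueq]; group
    rw [hkey]
    have hpF : p ∈ Fil e (r'+1) := SS_subset_Fil e r' hp
    have h1 : a' * aa⁻¹ ∈ Fil e (r'+2) :=
      mul_mem_Fil e (le_refl _) (le_refl _) ha' (inv_mem_Fil e haa)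
    have h2 : p * (a' * aa⁻¹) ∈ Fil e (r'+3) :=
      mul_mem_Fil e (by omega) (by omega) hpF h1
    exact mul_mem_Fil e (by omega) (by omega) h2 (inv_mem_Fil e hpF)
  · rw [Finset.card_image_of_injective]
    intro a b hab
    exact mul_left_cancel (mul_right_cancel hab)


/-- the gap sequence of shape indices. -/
noncomputable def jj : ℕ → ℕ
  | 0 => 0
  | (r+1) => (r+1) * Wm e (jj r) + 1

lemma jj_strictMono : StrictMono (jj e) := by
  apply strictMono_nat_of_lt_succ
  intro r
  have h1 : jj e r ≤ Wm e (jj e r) := le_Wm e _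
  show jj e r < (r+1) * Wm e (jj e r) + 1
  nlinarith

lemma le_jj (r : ℕ) : r ≤ jj e r := (jj_strictMono e).le_apply

lemma Wm_jj_gap {b d : ℕ} (h : b < d) : d * Wm e (jj e b) < Wm e (jj e d) := by
  induction d with
  | zero => omega
  | succ d ih =>
    have hW : Wm e (jj e (d+1)) ≥ (d+1) * Wm e (jj e d) + 1 := by
      have : jj e (d+1) = (d+1) * Wm e (jj e d) + 1 := rfl
      calc (d+1) * Wm e (jj e d) + 1 = jj e (d+1) := this.symm
        _ ≤ Wm e (jj e (d+1)) := le_Wm e _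
    rcases Nat.lt_or_ge b d with hbd | hbd
    · have h1 := ih hbd
      have h2 : Wm e (jj e d) ≥ 1 := Wm_pos e _
      nlinarith
    · have : b = d := by omega
      subst this
      omega

/-- boolean to bit. -/
def bitb : Bool → ℕ
  | false => 0
  | true => 1

lemma bitb_le_one (b : Bool) : bitb b ≤ 1 := by cases b <;> simp [bitb]

/-- shape index of structure `i` given pattern `ε`: the level is `(unpair i).1`. -/
noncomputable def shape (ε : ℕ → Bool) (i : ℕ) : ℕ :=
  jj e (2 * (Nat.unpair i).1 + bitb (ε (Nat.unpair i).1))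

/-- the maximal possible shape of structure `i`. -/
noncomputable def Shat (i : ℕ) : Finset G := SS e (jj e (2 * (Nat.unpair i).1 + 1))

lemma shape_subset_Shat (ε : ℕ → Bool) (i : ℕ) : SS e (shape e ε i) ⊆ Shat e i := by
  apply SS_mono
  apply (jj_strictMono e).monotone
  have := bitb_le_one (ε (Nat.unpair i).1)
  omega

/-- existence of a center for structure `i` avoiding previously placed structures. -/
lemma exists_center (i : ℕ) (prev : ∀ i', i' < i → G) :
    ∃ g : G, ∀ i' (h : i' < i),
      (((Fil e i * Shat e i : Finset G) : Set G) * {g}) ∩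
        (((Fil e i * Shat e i' : Finset G) : Set G) * {prev i' h}) = ∅ := by
  classical
  set bad : Finset G :=
    (Finset.range i).attach.biUnion
      (fun x => (Fil e i * Shat e i)⁻¹ *
        ((Fil e i * Shat e x.1) * {prev x.1 (Finset.mem_range.mp x.2)})) with hbad
  obtain ⟨g, hg⟩ := bad.exists_notMem
  refine ⟨g, fun i' h => ?_⟩
  rw [Set.eq_empty_iff_forall_notMem]
  rintro x ⟨hx1, hx2⟩
  rw [mem_ball_iff] at hx1
  apply hg
  rw [hbad, Finset.mem_biUnion]
  refine ⟨⟨i', Finset.mem_range.mpr h⟩, Finset.mem_attach _ _, ?_⟩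
  have : g = (x * g⁻¹)⁻¹ * x := by group
  rw [this]
  apply Finset.mul_mem_mul (Finset.inv_mem_inv hx1)
  have : x ∈ ((Fil e i * Shat e i' : Finset G) : Set G) * ({prev i' h} : Set G) := hx2
  rw [mem_ball_iff] at this
  have hx : x = (x * (prev i' h)⁻¹) * prev i' h := by group
  rw [hx]
  exact Finset.mul_mem_mul this (Finset.mem_singleton_self _)

/-- iterative construction of the centers. -/
noncomputable def zcl : ℕ → ℕ → G
  | 0 => fun _ => 1
  | (n+1) => fun i =>
      if i = n then Classical.choose (exists_center e n (fun i' _ => zcl n i'))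
      else zcl n i

/-- the centers. -/
noncomputable def zc (i : ℕ) : G := zcl e (i+1) i

lemma zcl_stable : ∀ {n m i : ℕ}, i < n → n ≤ m → zcl e m i = zcl e n i := by
  intro n m
  induction m with
  | zero => intro i h1 h2; omega
  | succ m ih =>
    intro i h1 h2
    rcases Nat.lt_or_ge i m with him | him
    · have : zcl e (m+1) i = zcl e m i := by
        simp only [zcl]
        rw [if_neg (by omega)]
      rcases Nat.lt_or_ge m n with hmn | hmn
      · have : n = m + 1 := by omega
        subst this; rfl
      · rw [this]; exact ih h1 hmn
    · have : i = m := by omega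
      subst this
      have : n = i + 1 := by omega
      subst this; rfl

lemma zc_spec {i i' : ℕ} (h : i' < i) :
    (((Fil e i * Shat e i : Finset G) : Set G) * {zc e i}) ∩
      (((Fil e i * Shat e i' : Finset G) : Set G) * {zc e i'}) = ∅ := by
  have hspec := Classical.choose_spec (exists_center e i (fun i' _ => zcl e i i')) i' h
  have h1 : zc e i = Classical.choose (exists_center e i (fun i' _ => zcl e i i')) := by
    show zcl e (i+1) i = _
    simp [zcl]
  have h2 : zcl e i i' = zc e i' := zcl_stable e (Nat.lt_succ_self i') h
  rw [h1, ← h2]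
  exact hspec

/-- the structure sets. -/
noncomputable def Ast (ε : ℕ → Bool) (i : ℕ) : Set G :=
  (SS e (shape e ε i) : Set G) * {zc e i}

lemma Ast_finite (ε : ℕ → Bool) (i : ℕ) : (Ast e ε i).Finite := by
  have himg : ((SS e (shape e ε i) : Finset G) : Set G) * {zc e i}
      = (fun g => g * zc e i) '' ((SS e (shape e ε i) : Finset G) : Set G) := by
    ext x
    constructor
    · intro hx
      rw [mem_ball_iff] at hx
      exact ⟨x * (zc e i)⁻¹, hx, by group⟩
    · rintro ⟨a, ha, rfl⟩
      exact mem_ball_of (by simpa using ha)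
  rw [Ast, himg]
  exact ((SS e (shape e ε i)).finite_toSet).image _

lemma Ast_ncard (ε : ℕ → Bool) (i : ℕ) : (Ast e ε i).ncard = Wm e (shape e ε i) := by
  have himg : ((SS e (shape e ε i) : Finset G) : Set G) * {zc e i}
      = (fun g => g * zc e i) '' ((SS e (shape e ε i) : Finset G) : Set G) := by
    ext x
    constructor
    · intro hx
      rw [mem_ball_iff] at hx
      exact ⟨x * (zc e i)⁻¹, hx, by group⟩
    · rintro ⟨a, ha, rfl⟩
      exact mem_ball_of (by simpa using ha)
  rw [Ast, himg, Set.ncard_image_of_injective _ (mul_left_injective _), Set.ncard_coe_finset]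
  rfl

/-- main separation lemma: distinct structures, even with different patterns,
are far apart at scale up to `max i i'`. -/
lemma sep {ε ε' : ℕ → Bool} {i i' s : ℕ} (hne : i ≠ i') (hs : s ≤ max i i') :
    ((Fil e s : Finset G) : Set G) * Ast e ε i ∩ Ast e ε' i' = ∅ := by
  rw [Set.eq_empty_iff_forall_notMem]
  rintro x ⟨hx1, hx2⟩
  -- x = g * (a * zc i) with g ∈ Fil s, a ∈ SS shape; also x ∈ SS shape' * zc i'
  obtain ⟨g, hg, y, hy, rfl⟩ := hx1
  rw [Ast, mem_ball_iff] at hy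
  rw [Ast, mem_ball_iff] at hx2
  -- wlog via cases
  rcases Nat.lt_or_ge i' i with hlt | hge
  · have hmax : max i i' = i := by omega
    rw [hmax] at hs
    have h1 : g * y * (zc e i)⁻¹ ∈ Fil e i * Shat e i := by
      have : g * y * (zc e i)⁻¹ = g * (y * (zc e i)⁻¹) := by group
      rw [this]
      exact Finset.mul_mem_mul (Fil_mono e hs hg)
        (shape_subset_Shat e ε i (by simpa using hy))
    have h2 : g * y * (zc e i')⁻¹ ∈ Fil e i * Shat e i' := by
      have : g * y * (zc e i')⁻¹ = 1 * (g * y * (zc e i')⁻¹) := by group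
      rw [this]
      exact Finset.mul_mem_mul (one_mem_Fil e i)
        (shape_subset_Shat e ε' i' (by simpa using hx2))
    have := zc_spec e hlt
    rw [Set.eq_empty_iff_forall_notMem] at this
    exact this (g * y) (Set.mem_inter (mem_ball_of h1) (mem_ball_of h2))
  · have hlt : i < i' := by omega
    have hmax : max i i' = i' := by omega
    rw [hmax] at hs
    have h1 : g * y * (zc e i')⁻¹ ∈ Fil e i' * Shat e i' := by
      have : g * y * (zc e i')⁻¹ = 1 * (g * y * (zc e i')⁻¹) := by group
      rw [this]
      exact Finset.mul_mem_mul (one_mem_Fil e i')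
        (shape_subset_Shat e ε' i' (by simpa using hx2))
    have h2 : g * y * (zc e i)⁻¹ ∈ Fil e i' * Shat e i := by
      have : g * y * (zc e i)⁻¹ = g * (y * (zc e i)⁻¹) := by group
      rw [this]
      exact Finset.mul_mem_mul (Fil_mono e hs hg)
        (shape_subset_Shat e ε i (by simpa using hy))
    have := zc_spec e hlt
    rw [Set.eq_empty_iff_forall_notMem] at this
    exact this (g * y) (Set.mem_inter (mem_ball_of h1) (mem_ball_of h2))

/-- the thick space associated with a pattern. -/
noncomputable def Xs (ε : ℕ → Bool) : Set G := ⋃ i, Ast e ε i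

lemma Ast_subset_Xs (ε : ℕ → Bool) (i : ℕ) : Ast e ε i ⊆ Xs e ε :=
  Set.subset_iUnion (Ast e ε) i

lemma Xs_thick (ε : ℕ → Bool) : Thick (Xs e ε) := by
  intro F
  obtain ⟨k, hk⟩ := finset_subset_Fil e F
  set i := Nat.pair k 0
  refine ⟨zc e i, ?_, ?_⟩
  · apply Ast_subset_Xs e ε i
    rw [Ast]
    exact mem_ball_of (by simpa using one_mem_SS e _)
  · intro x hx
    obtain ⟨g, hg, y, hy, rfl⟩ := hx
    apply Ast_subset_Xs e ε i
    rw [Ast]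
    simp only [Set.mem_singleton_iff] at hy
    subst hy
    apply mem_ball_of
    have h1 : g ∈ Fil e k := hk hg
    have h2 : k ≤ shape e ε i := by
      have h3 : (Nat.unpair i).1 = k := by simp [i]
      have h4 : 2 * k ≤ 2 * k + bitb (ε k) := by omega
      have h5 : k ≤ jj e (2*k) := le_trans (by omega) (le_jj e (2*k))
      rw [shape, h3]
      exact le_trans h5 ((jj_strictMono e).monotone (by omega))
    have : g ∈ SS e (shape e ε i) :=
      Fil_subset_SS e _ (Fil_mono e h2 h1)
    simpa using this

lemma Ast_def (ε : ℕ → Bool) (i : ℕ) :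
    Ast e ε i = ((SS e (shape e ε i) : Finset G) : Set G) * {zc e i} := rfl

lemma Ast_disjoint {ε ε' : ℕ → Bool} {i i' : ℕ} (hne : i ≠ i') :
    Ast e ε i ∩ Ast e ε' i' = ∅ := by
  rw [Set.eq_empty_iff_forall_notMem]
  rintro x ⟨hx1, hx2⟩
  have hsep := sep e (ε := ε) (ε' := ε') hne (s := 0) (by omega)
  rw [Set.eq_empty_iff_forall_notMem] at hsep
  apply hsep x
  refine ⟨?_, hx2⟩
  have h1 : (1:G) ∈ ((Fil e 0 : Finset G) : Set G) := by
    simp [Fil]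
  have := Set.mul_mem_mul h1 hx1
  simpa using this

/-- The main lemma: patterns that differ at arbitrarily late levels give
non-coarsely-equivalent spaces. -/
theorem main_noneq (ε δ : ℕ → Bool)
    (hd : ∀ N, ∃ ℓ, N ≤ ℓ ∧ ε ℓ ≠ δ ℓ) : ¬ CoarselyEquiv (Xs e ε) (Xs e δ) := by
  rintro ⟨Y, Y', ⟨hYX, Fc, hYl⟩, ⟨hY'X, Fc', hY'l⟩, f, hfwd, hbwd⟩
  obtain ⟨c, hc⟩ := finset_subset_Fil e Fc
  obtain ⟨c', hc'⟩ := finset_subset_Fil e Fc'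
  set K := (Fil e c).card with hK
  set K' := (Fil e c').card with hK'
  -- choose the level ℓ at which the patterns differ
  obtain ⟨ℓ, hℓge, hℓne⟩ := hd (max K K' + 1)
  set q : ℕ := 2 * ℓ + bitb (ε ℓ) with hq
  set a : ℕ := jj e q + 2 with ha
  set W : ℕ := Wm e (jj e q) with hWdef
  have hW1 : 1 ≤ W := Wm_pos e _
  -- forward control at the diameter scale of level-ℓ structures
  obtain ⟨Fa', hFa'⟩ := hfwd (Fil e a)
  obtain ⟨σa, hσa⟩ := finset_subset_Fil e Fa'
  -- the isolation scale we shall need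
  set s' : ℕ := max (K' * W + 4) (c' + 1) with hs'
  have hs'4 : 4 ≤ s' := le_trans (by omega) (le_max_left _ _)
  have hs'c' : c' + 1 ≤ s' := le_max_right _ _
  have hs'KW : K' * W + 4 ≤ s' := le_max_left _ _
  -- backward control at the appropriate scale
  set u' : ℕ := max (s' + 1) σa + 1 with hu'
  obtain ⟨Fb', hFb'⟩ := hbwd (Fil e u')
  obtain ⟨τ', hτ'⟩ := finset_subset_Fil e Fb'
  set bound : ℕ := max (max c c') (max τ' (σa + 2)) + 1 with hbound
  -- the pieces of Y and their images
  set Ym : ℕ → Set G := fun m => Y ∩ Ast e ε (Nat.pair ℓ m) with hYmdef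
  set Dm : ℕ → Set G := fun m =>
    (fun x : ↥Y => ((f x : G))) '' {x : ↥Y | (x : G) ∈ Ym m} with hDmdef
  have hDmY' : ∀ m, Dm m ⊆ Y' := by
    rintro m p ⟨x, _, rfl⟩
    exact (f x).2
  have hDm_disj : ∀ m m', m ≠ m' → Dm m ∩ Dm m' = ∅ := by
    intro m m' hne
    rw [Set.eq_empty_iff_forall_notMem]
    rintro p ⟨⟨x, hx, rfl⟩, ⟨x2, hx2, hx2eq⟩⟩
    have : x2 = x := f.injective (Subtype.val_injective hx2eq)
    subst this
    have hpair : Nat.pair ℓ m ≠ Nat.pair ℓ m' := by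
      intro hcon
      exact hne (by simpa using (Nat.pair_eq_pair.mp hcon).2)
    have hdisj := Ast_disjoint e (ε := ε) (ε' := ε) hpair
    rw [Set.eq_empty_iff_forall_notMem] at hdisj
    exact hdisj _ ⟨hx.2, hx2.2⟩
  -- the junk region and the bad indices
  set JunkN : ℕ := σa + 2 with hJunkN
  set Junk : Set G := ⋃ (i'' : ℕ) (_ : i'' < JunkN), Ast e δ i'' with hJunk
  have hJunkFin : Junk.Finite := by
    apply Set.Finite.biUnion (Set.finite_Iio JunkN)
    intro i'' _
    exact Ast_finite e δ i''
  set Mbad : Set ℕ := {m | (Dm m ∩ Junk).Nonempty} with hMbad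
  have hMbadFin : Mbad.Finite := by
    have hch : ∀ m ∈ Mbad, ∃ p, p ∈ Dm m ∩ Junk := fun m hm => hm
    classical
    set w' : ℕ → G := fun m => if h : m ∈ Mbad then (hch m h).choose else 1 with hw'
    have hmem : ∀ m ∈ Mbad, w' m ∈ Dm m ∩ Junk := by
      intro m hm
      rw [hw']
      simp only [dif_pos hm]
      exact (hch m hm).choose_spec
    apply Set.Finite.of_finite_image (f := w')
    · apply hJunkFin.subset
      rintro p ⟨m, hm, rfl⟩
      exact (hmem m hm).2
    · intro m1 hm1 m2 hm2 heq
      by_contra hne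
      have hdisj := hDm_disj m1 m2 hne
      rw [Set.eq_empty_iff_forall_notMem] at hdisj
      exact hdisj (w' m1) ⟨(hmem m1 hm1).1, heq ▸ (hmem m2 hm2).1⟩
  -- choose a good copy m
  obtain ⟨m, hm⟩ : ∃ m, m ∉ Mbad ∪ {m : ℕ | Nat.pair ℓ m < bound} := by
    have h2 : Set.Finite {m : ℕ | Nat.pair ℓ m < bound} := by
      apply (Set.finite_Iio bound).subset
      intro m hm
      exact lt_of_le_of_lt (Nat.right_le_pair ℓ m) hm
    exact ((hMbadFin.union h2).infinite_compl).nonempty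
  have hmbad : m ∉ Mbad := fun h => hm (Or.inl h)
  have hibound : bound ≤ Nat.pair ℓ m := by
    by_contra h
    exact hm (Or.inr (by simpa using Nat.lt_of_not_le h))
  set i : ℕ := Nat.pair ℓ m with hidef
  have hiℓ : (Nat.unpair i).1 = ℓ := by simp [hidef]
  have hshape : shape e ε i = jj e q := by rw [shape, hiℓ]
  have hic : c < i := by
    have : c ≤ max (max c c') (max τ' (σa + 2)) := le_trans (le_max_left _ _) (le_max_left _ _)
    omega
  have hiτ : τ' < i := by
    have : τ' ≤ max (max c c') (max τ' (σa + 2)) := le_trans (le_max_left _ _) (le_max_right _ _)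
    omega
  -- the source structure
  set A : Set G := Ast e ε i with hAdef
  have hAfin : A.Finite := Ast_finite e ε i
  have hAcard : A.ncard = W := by rw [hAdef, Ast_ncard, hshape]
  -- density of Y in A
  have hdens : A ⊆ ((Fil e c : Finset G) : Set G) * Ym m := by
    intro x hx
    have hxX : x ∈ Xs e ε := Ast_subset_Xs e ε i hx
    have hyA : ∀ y ∈ Y, y * x⁻¹ ∈ Fil e c → y ∈ Ym m := by
      intro y hy hyx
      obtain ⟨i'', hi''⟩ := Set.mem_iUnion.mp (hYX hy)
      rcases eq_or_ne i'' i with rfl | hne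
      · exact ⟨hy, hi''⟩
      · exfalso
        have hsep := sep e (ε := ε) (ε' := ε) (Ne.symm hne) (s := c)
          (le_trans (le_of_lt hic) (le_max_left _ _))
        rw [Set.eq_empty_iff_forall_notMem] at hsep
        apply hsep y
        constructor
        · have : y = (y * x⁻¹) * x := by group
          rw [this]
          exact Set.mul_mem_mul (by exact_mod_cast hyx) hx
        · exact hi''
    rcases hYl hxX with hx1 | hx1
    · obtain ⟨g, hg, y, hy, rfl⟩ := hx1
      have hyx : y * (g * y)⁻¹ ∈ Fil e c := by
        have : y * (g * y)⁻¹ = g⁻¹ := by group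
        rw [this]
        exact inv_mem_Fil e (hc hg)
      have hyY : y ∈ Ym m := hyA y hy hyx
      exact Set.mul_mem_mul (by exact_mod_cast (hc hg)) hyY
    · have : x ∈ Ym m := hyA x hx1 (by simpa using one_mem_Fil e c)
      have h1 : (1:G) ∈ ((Fil e c : Finset G) : Set G) := by
        exact_mod_cast one_mem_Fil e c
      simpa using Set.mul_mem_mul h1 this
  have hYmsubA : Ym m ⊆ A := Set.inter_subset_right
  have hYmfin : (Ym m).Finite := hAfin.subset hYmsubA
  have hYmcard_le : (Ym m).ncard ≤ W := by
    rw [← hAcard]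
    exact Set.ncard_le_ncard hYmsubA hAfin
  have hWle : W ≤ K * (Ym m).ncard := by
    calc W = A.ncard := hAcard.symm
      _ ≤ (((Fil e c : Finset G) : Set G) * Ym m).ncard :=
          Set.ncard_le_ncard hdens (((Fil e c).finite_toSet).mul hYmfin)
      _ ≤ K * (Ym m).ncard := ncard_mul_le _ hYmfin
  -- Ym is nonempty; base point
  have hYmne : (Ym m).Nonempty := by
    rw [Set.nonempty_iff_ne_empty]
    intro hcon
    rw [hcon] at hWle
    simp at hWle
    omega
  obtain ⟨v0, hv0⟩ := hYmne
  set x0 : ↥Y := ⟨v0, hv0.1⟩ with hx0def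
  set p0 : G := (f x0 : G) with hp0def
  -- cardinality of the image piece
  have hDmfin : (Dm m).Finite := by
    apply Set.Finite.image
    have : {x : ↥Y | (x : G) ∈ Ym m} = (Subtype.val) ⁻¹' (Ym m) := rfl
    rw [this]
    exact Set.Finite.preimage (Set.injOn_of_injective Subtype.val_injective) hYmfin
  have hDmcard : (Dm m).ncard = (Ym m).ncard := by
    have h1 : (Dm m).ncard = {x : ↥Y | (x : G) ∈ Ym m}.ncard := by
      apply Set.ncard_image_of_injective
      intro x y hxy
      exact f.injective (Subtype.val_injective hxy)
    have h2 : Subtype.val '' {x : ↥Y | (x : G) ∈ Ym m} = Ym m := by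
      ext g
      constructor
      · rintro ⟨x, hx, rfl⟩; exact hx
      · intro hg; exact ⟨⟨g, hg.1⟩, hg, rfl⟩
    have h3 : ({x : ↥Y | (x : G) ∈ Ym m}).ncard = (Ym m).ncard := by
      conv_rhs => rw [← h2]
      exact (Set.ncard_image_of_injective _ Subtype.val_injective).symm
    rw [h1, h3]
  have hDmW : (Dm m).ncard ≤ W := by rw [hDmcard]; exact hYmcard_le
  have hWDm : W ≤ K * (Dm m).ncard := by rw [hDmcard]; exact hWle
  have hDmY'' := hDmY' m
  -- diameter control of the image piece
  have hdiam : ∀ p ∈ Dm m, p * p0⁻¹ ∈ Fil e σa := by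
    rintro p ⟨x, hx, rfl⟩
    show ((f x : G)) * p0⁻¹ ∈ Fil e σa
    have hxA : (x : G) ∈ ((SS e (jj e q) : Finset G) : Set G) * {zc e i} := by
      have := (hYmsubA hx)
      rw [hAdef, Ast_def, hshape] at this
      exact this
    have hx0A : (x0 : G) ∈ ((SS e (jj e q) : Finset G) : Set G) * {zc e i} := by
      have := (hYmsubA hv0)
      rw [hAdef, Ast_def, hshape] at this
      exact this
    have hdist : (x : G) * (x0 : G)⁻¹ ∈ Fil e a := SS_diam e hx0A hxA
    have hball : (x : G) ∈ ((Fil e a : Finset G) : Set G) * {(x0 : G)} ∪ {(x0 : G)} :=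
      Or.inl (mem_ball_of hdist)
    have := hFa' x0 x hball
    rcases this with h | h
    · rw [mem_ball_iff] at h
      exact Fil_mono e (le_refl σa) (hσa h)
    · simp only [Set.mem_singleton_iff] at h
      rw [h]
      simpa [hp0def] using one_mem_Fil e σa
  -- isolation of the image piece in Y'
  have hiso : ∀ qq ∈ Y', ∀ p ∈ Dm m, qq * p⁻¹ ∈ Fil e (s' + 1) → qq ∈ Dm m := by
    intro qq hqq p hp hqp
    have hqp0 : qq * p0⁻¹ ∈ Fil e u' := by
      have heq : qq * p0⁻¹ = (qq * p⁻¹) * (p * p0⁻¹) := by group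
      rw [heq, hu']
      exact mul_mem_Fil e (le_max_left _ _) (le_max_right _ _) hqp (hdiam p hp)
    set yq : ↥Y' := ⟨qq, hqq⟩ with hyq
    have hball : (yq : G) ∈ ((Fil e u' : Finset G) : Set G) * {(f x0 : G)} ∪ {(f x0 : G)} :=
      Or.inl (mem_ball_of hqp0)
    have hw := hFb' (f x0) yq hball
    rw [Equiv.symm_apply_apply] at hw
    set w : ↥Y := f.symm yq with hwdef
    have hwτ : (w : G) * (x0 : G)⁻¹ ∈ Fil e τ' := by
      rcases hw with h | h
      · rw [mem_ball_iff] at h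
        exact hτ' h
      · simp only [Set.mem_singleton_iff] at h
        rw [h]
        simpa using one_mem_Fil e τ'
    have hwYm : (w : G) ∈ Ym m := by
      obtain ⟨i'', hi''⟩ := Set.mem_iUnion.mp (hYX w.2)
      rcases eq_or_ne i'' i with rfl | hne
      · exact ⟨w.2, hi''⟩
      · exfalso
        have hsep := sep e (ε := ε) (ε' := ε) (Ne.symm hne) (s := τ')
          (le_trans (le_of_lt hiτ) (le_max_left _ _))
        rw [Set.eq_empty_iff_forall_notMem] at hsep
        apply hsep (w : G)
        constructor
        · have hx0A : (x0 : G) ∈ A := hYmsubA hv0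
          have : (w : G) = ((w : G) * (x0 : G)⁻¹) * (x0 : G) := by group
          rw [this]
          exact Set.mul_mem_mul (by exact_mod_cast hwτ) hx0A
        · exact hi''
    refine ⟨w, hwYm, ?_⟩
    show ((f w : G)) = qq
    rw [hwdef, Equiv.apply_symm_apply]
  -- the image piece is nonempty; its host structure
  have hDmne : (Dm m).Nonempty := ⟨(f x0 : G), ⟨x0, hv0, rfl⟩⟩
  obtain ⟨u, hu⟩ := hDmne
  obtain ⟨β, huβ⟩ := Set.mem_iUnion.mp (hY'X (hDmY'' hu))
  -- host is not junk
  have hβbig : JunkN ≤ β := by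
    by_contra hcon
    apply hmbad
    exact ⟨u, hu, Set.mem_iUnion.mpr ⟨β, Set.mem_iUnion.mpr ⟨by omega, huβ⟩⟩⟩
  -- the whole image piece lies in the host structure
  have hsingle : ∀ p ∈ Dm m, p ∈ Ast e δ β := by
    intro p hp
    obtain ⟨β'', hβ''⟩ := Set.mem_iUnion.mp (hY'X (hDmY'' hp))
    rcases eq_or_ne β'' β with rfl | hne
    · exact hβ''
    · exfalso
      have hpu : p * u⁻¹ ∈ Fil e (σa + 1) := by
        have heq : p * u⁻¹ = (p * p0⁻¹) * (u * p0⁻¹)⁻¹ := by group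
        rw [heq]
        exact mul_mem_Fil e (le_refl σa) (le_refl σa) (hdiam p hp)
          (inv_mem_Fil e (hdiam u hu))
      have hsep := sep e (ε := δ) (ε' := δ) (Ne.symm hne) (s := σa + 1)
        (by have : σa + 2 ≤ β := hβbig; omega)
      rw [Set.eq_empty_iff_forall_notMem] at hsep
      apply hsep p
      constructor
      · have : p = (p * u⁻¹) * u := by group
        rw [this]
        exact Set.mul_mem_mul (by exact_mod_cast hpu) huβ
      · exact hβ''
  -- every point of Xs e δ at scale s' from u has its Y'-witness inside Dm
  have hcover : ∀ x ∈ Xs e δ, x * u⁻¹ ∈ Fil e s' →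
      ∃ y' ∈ Dm m, x * y'⁻¹ ∈ Fil e c' := by
    intro x hxX hxu
    rcases hY'l hxX with hx1 | hx1
    · obtain ⟨g, hg, y', hy', rfl⟩ := hx1
      have hy'u : y' * u⁻¹ ∈ Fil e (s' + 1) := by
        have h2 : y' * u⁻¹ = g⁻¹ * ((g * y') * u⁻¹) := by group
        rw [h2]
        exact mul_mem_Fil e (le_trans (by omega) hs'c') (le_refl s')
          (inv_mem_Fil e (hc' hg)) hxu
      have hy'Dm : y' ∈ Dm m := hiso y' hy' u hu hy'u
      refine ⟨y', hy'Dm, ?_⟩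
      have : (g * y') * y'⁻¹ = g := by group
      rw [this]
      exact hc' hg
    · have hxDm : x ∈ Dm m := hiso x hx1 u hu (Fil_mono e (by omega) hxu)
      refine ⟨x, hxDm, ?_⟩
      simpa using one_mem_Fil e c'
  -- shape data of the host
  set ℓβ : ℕ := (Nat.unpair β).1 with hℓβ
  set q'' : ℕ := 2 * ℓβ + bitb (δ ℓβ) with hq''
  have hjβ : shape e δ β = jj e q'' := rfl
  have hqne : q'' ≠ q := by
    intro hcon
    rw [hq'', hq] at hcon
    have hb1 := bitb_le_one (δ ℓβ)
    have hb2 := bitb_le_one (ε ℓ)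
    have hℓeq : ℓβ = ℓ ∧ bitb (δ ℓβ) = bitb (ε ℓ) := by omega
    apply hℓne
    obtain ⟨h1, h2⟩ := hℓeq
    rw [h1] at h2
    cases hδ : δ ℓ <;> cases hε : ε ℓ <;> rw [hδ, hε] at h2 <;>
      simp [bitb] at h2 <;> rfl
  -- the two cases
  rcases le_or_gt (jj e q'' + 2) s' with hcase | hcase
  · -- containment case: the host is entirely inside the isolation ball of Dm
    have hAβu : ∀ x ∈ Ast e δ β, x * u⁻¹ ∈ Fil e s' := by
      intro x hx
      have hx' : x ∈ ((SS e (jj e q'') : Finset G) : Set G) * {zc e β} := by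
        rw [Ast_def, hjβ] at hx; exact hx
      have hu' : u ∈ ((SS e (jj e q'') : Finset G) : Set G) * {zc e β} := by
        rw [Ast_def, hjβ] at huβ; exact huβ
      exact Fil_mono e hcase (SS_diam e hu' hx')
    have hAβcover : Ast e δ β ⊆ ((Fil e c' : Finset G) : Set G) * Dm m := by
      intro x hx
      obtain ⟨y', hy', hxy'⟩ := hcover x (Ast_subset_Xs e δ β hx) (hAβu x hx)
      have : x = (x * y'⁻¹) * y' := by group
      rw [this]
      exact Set.mul_mem_mul (by exact_mod_cast hxy') hy'
    have hWq'' : (Ast e δ β).ncard = Wm e (jj e q'') := by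
      rw [Ast_ncard, hjβ]
    have hup : Wm e (jj e q'') ≤ K' * (Dm m).ncard := by
      calc Wm e (jj e q'') = (Ast e δ β).ncard := hWq''.symm
        _ ≤ (((Fil e c' : Finset G) : Set G) * Dm m).ncard :=
            Set.ncard_le_ncard hAβcover (((Fil e c').finite_toSet).mul hDmfin)
        _ ≤ K' * (Dm m).ncard := ncard_mul_le _ hDmfin
    have hdown : (Dm m).ncard ≤ Wm e (jj e q'') := by
      rw [← hWq'']
      exact Set.ncard_le_ncard hsingle (Ast_finite e δ β)
    -- gap contradiction
    rcases Nat.lt_or_ge q'' q with hlt | hge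
    · have hgap := Wm_jj_gap e hlt
      have h1 : W ≤ K * Wm e (jj e q'') := le_trans hWDm (by
        exact Nat.mul_le_mul_left K hdown)
      have h2 : q * Wm e (jj e q'') < W := hgap
      have h3 : q < K :=
        Nat.lt_of_mul_lt_mul_right (lt_of_lt_of_le h2 h1)
      have hKmax := le_max_left K K'
      have hqbig : 2 * (max K K' + 1) ≤ q := by rw [hq]; omega
      omega
    · have hgt : q < q'' := by omega
      have hgap := Wm_jj_gap e hgt
      have h1 : Wm e (jj e q'') ≤ K' * W :=
        le_trans hup (Nat.mul_le_mul_left K' hDmW)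
      have h2 : q'' * W < Wm e (jj e q'') := hgap
      have h3 : q'' < K' :=
        Nat.lt_of_mul_lt_mul_right (lt_of_lt_of_le h2 h1)
      have hKmax := le_max_right K K'
      have hqbig : 2 * (max K K' + 1) ≤ q := by rw [hq]; omega
      omega
  · -- section case: the host has a large section near u inside scale s'
    set r : ℕ := s' - 3 with hr
    have hr1 : 1 ≤ r := by omega
    have hrj : r ≤ jj e q'' := by omega
    have hr3 : r + 3 = s' := by omega
    have huA : u ∈ ((SS e (jj e q'') : Finset G) : Set G) * {zc e β} := by
      rw [Ast_def, hjβ] at huβ; exact huβ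
    obtain ⟨sec, hsec1, hsec2, hsec3⟩ := SS_section e hr1 hrj huA
    have hseccover : (sec : Set G) ⊆ ((Fil e c' : Finset G) : Set G) * Dm m := by
      intro x hx
      have hxA : x ∈ Ast e δ β := by
        rw [Ast_def, hjβ]
        exact hsec1 hx
      have hxu : x * u⁻¹ ∈ Fil e s' := by
        rw [← hr3]
        exact hsec2 x (by exact_mod_cast hx)
      obtain ⟨y', hy', hxy'⟩ := hcover x (Ast_subset_Xs e δ β hxA) hxu
      have : x = (x * y'⁻¹) * y' := by group
      rw [this]
      exact Set.mul_mem_mul (by exact_mod_cast hxy') hy'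
    have hbig : K' * W + 1 ≤ sec.card := by
      have h1 : r ≤ (Fil e r).card := le_Fil_card e r
      omega
    have hsmall : sec.card ≤ K' * W := by
      calc sec.card = (sec : Set G).ncard := (Set.ncard_coe_finset sec).symm
        _ ≤ (((Fil e c' : Finset G) : Set G) * Dm m).ncard :=
            Set.ncard_le_ncard hseccover (((Fil e c').finite_toSet).mul hDmfin)
        _ ≤ K' * (Dm m).ncard := ncard_mul_le _ hDmfin
        _ ≤ K' * W := Nat.mul_le_mul_left K' hDmW
    omega

end ThickAux

open ThickAux in
lemma coarselyEquiv_refl {G : Type*} [Group G] (X : Set G) : CoarselyEquiv X X := by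
  refine ⟨X, X, ⟨subset_rfl, ∅, by simp⟩, ⟨subset_rfl, ∅, by simp⟩, Equiv.refl _, ?_, ?_⟩
  · exact fun F => ⟨F, fun x y h => h⟩
  · exact fun F => ⟨F, fun x y h => h⟩

/-- the boolean pattern associated with a set of naturals. -/
noncomputable def patt (S : Set ℕ) : ℕ → Bool := fun ℓ =>
  @decide ((Nat.unpair ℓ).1 ∈ S) (Classical.propDecidable _)

lemma patt_diff {S S' : Set ℕ} (h : S ≠ S') :
    ∀ N, ∃ ℓ, N ≤ ℓ ∧ patt S ℓ ≠ patt S' ℓ := by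
  obtain ⟨k, hk⟩ : ∃ k, (k ∈ S ∧ k ∉ S') ∨ (k ∈ S' ∧ k ∉ S) := by
    by_contra hcon
    push_neg at hcon
    apply h
    ext k
    have := hcon k
    tauto
  intro N
  refine ⟨Nat.pair k N, Nat.right_le_pair k N, ?_⟩
  have hup : (Nat.unpair (Nat.pair k N)).1 = k := by simp
  simp only [patt, hup]
  rcases hk with ⟨h1, h2⟩ | ⟨h1, h2⟩ <;> simp [h1, h2]

/-- Every countably infinite group `G` contains `2^ℵ₀` pairwise non-coarsely-equivalent
thick subsets. -/
theorem countable_group_continuum_thick_coarse_subsets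
    (G : Type*) [Group G] [Countable G] [Infinite G] :
    ∃ 𝔉 : Set (Set G),
      (∀ A ∈ 𝔉, Thick A) ∧
      Cardinal.mk 𝔉 = 2 ^ Cardinal.aleph0 ∧
      ∀ A ∈ 𝔉, ∀ B ∈ 𝔉, A ≠ B → ¬ CoarselyEquiv A B := by
  classical
  obtain ⟨enc⟩ := nonempty_encodable G
  letI := enc
  letI : Denumerable G := Denumerable.ofEncodableOfInfinite G
  set e : ℕ ≃ G := (Denumerable.eqv G).symm with he
  set XX : Set ℕ → Set G := fun S => ThickAux.Xs e (patt S) with hXX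
  have hnoneq : ∀ S S' : Set ℕ, S ≠ S' → ¬ CoarselyEquiv (XX S) (XX S') := by
    intro S S' hne
    exact ThickAux.main_noneq e (patt S) (patt S') (patt_diff hne)
  have hXXinj : Function.Injective XX := by
    intro S S' hEQ
    by_contra hne
    exact hnoneq S S' hne (hEQ ▸ coarselyEquiv_refl (XX S))
  refine ⟨Set.range XX, ?_, ?_, ?_⟩
  · rintro A ⟨S, rfl⟩
    exact ThickAux.Xs_thick e (patt S)
  · have h1 := Cardinal.mk_range_eq_of_injective hXXinj
    rw [Cardinal.mk_set, Cardinal.mk_nat] at h1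
    rw [Cardinal.lift_id' (Cardinal.mk (Set.range XX))] at h1
    rw [h1, Cardinal.lift_two_power, Cardinal.lift_aleph0]
  · rintro A ⟨S, rfl⟩ B ⟨S', rfl⟩ hne
    exact hnoneq S S' (fun h => hne (by rw [h]))
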